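/- Let F = x_0^{s+2} + x_1^{s+2} + ... + x_{N-2}^{s+2} be a Fermat polynomial of degree s+2 in N-1 variables (with N ≥ 3, s ≥ 1). Then the apolar ideal F^⊥ in the ring of constant-coefficient differential operators C[∂_0,...,∂_{N-2}] is generated by the monomials ∂_i∂_j for 0 ≤ i < j ≤ N-2 together with the binomials ∂_i^{s+2} - ∂_j^{s+2} for 0 ≤ i < j ≤ N-2. -/

import Mathlib

open MvPolynomial

/-- The contraction (apolarity) action: a polynomial `D` in the dual variables
`∂_i` acts on `f ∈ ℂ[x_0,…]` as a constant-coefficient differential operator: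
`∂^a · x^b = (∏ᵢ (bᵢ)!/(bᵢ-aᵢ)!) x^{b-a}` if `a ≤ b` componentwise, else `0`. -/
noncomputable def contract {σ : Type*} (D f : MvPolynomial σ ℂ) : MvPolynomial σ ℂ :=
  (AddMonoidAlgebra.coeff D).sum fun a ca => (AddMonoidAlgebra.coeff f).sum fun b cb =>
    if a ≤ b then
      (ca * cb * (a.prod fun i n => ((b i).descFactorial n : ℂ))) •
        MvPolynomial.monomial (b - a) (1 : ℂ)
    else 0


namespace ApolarAux
noncomputable def ctL {σ : Type*} (a b : σ →₀ ℕ) : ℂ :=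
  a.prod fun i n => ((b i).descFactorial n : ℂ)

lemma ctL_eq_zero {σ : Type*} {a b : σ →₀ ℕ} (h : ¬ a ≤ b) : ctL a b = 0 := by
  rw [Finsupp.le_iff] at h
  push_neg at h
  obtain ⟨i, hi, hlt⟩ := h
  refine Finset.prod_eq_zero hi ?_
  show ((b i).descFactorial (a i) : ℂ) = 0
  exact_mod_cast Nat.descFactorial_eq_zero_iff_lt.2 hlt

lemma Nat.descFactorial_add' (n m k : ℕ) :
    n.descFactorial (m + k) = n.descFactorial m * (n - m).descFactorial k := by
  induction k with
  | zero => simp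
  | succ k ih =>
      rw [← Nat.add_assoc, Nat.descFactorial_succ, Nat.descFactorial_succ, ih,
        Nat.sub_sub]
      ring

lemma ctL_add {σ : Type*} (a a' b : σ →₀ ℕ) :
    ctL (a + a') b = ctL a' b * ctL a (b - a') := by
  classical
  unfold ctL
  rw [Finsupp.prod_of_support_subset (a + a') (Finsupp.support_add)
      (fun i n => ((b i).descFactorial n : ℂ)) (by simp),
    Finsupp.prod_of_support_subset a' (Finset.subset_union_right)
      (fun i n => ((b i).descFactorial n : ℂ)) (by simp),
    Finsupp.prod_of_support_subset a (Finset.subset_union_left)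
      (fun i n => (((b - a') i).descFactorial n : ℂ)) (by simp),
    ← Finset.prod_mul_distrib]
  refine Finset.prod_congr rfl fun i _ => ?_
  rw [Finsupp.add_apply, Finsupp.tsub_apply]
  norm_cast
  rw [Nat.add_comm]
  exact Nat.descFactorial_add' (b i) (a' i) (a i)

lemma contract_monomial_monomial {σ : Type*} (a b : σ →₀ ℕ) (c d : ℂ) :
    contract (monomial a c) (monomial b d) = (c * d * ctL a b) • monomial (b - a) 1 := by
  unfold contract
  rw [MvPolynomial.sum_monomial_eq, MvPolynomial.sum_monomial_eq]
  · split_ifs with h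
    · rfl
    · rw [ctL_eq_zero h, mul_zero, zero_smul]
  · split_ifs <;> simp
  · rw [MvPolynomial.sum_monomial_eq] <;> split_ifs <;> simp

lemma contract_zero_left {σ : Type*} (f : MvPolynomial σ ℂ) : contract 0 f = 0 :=
  Finsupp.sum_zero_index

lemma contract_zero_right {σ : Type*} (D : MvPolynomial σ ℂ) : contract D 0 = 0 := by
  unfold contract
  rw [show ((AddMonoidAlgebra.coeff (0 : MvPolynomial σ ℂ)).sum) = fun _h => (0 : MvPolynomial σ ℂ) from
    funext fun _ => Finsupp.sum_zero_index]
  exact Finsupp.sum_fun_zero _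

lemma contract_add_left {σ : Type*} (D E f : MvPolynomial σ ℂ) :
    contract (D + E) f = contract D f + contract E f := by
  classical
  unfold contract
  rw [AddMonoidAlgebra.coeff_add, Finsupp.sum_add_index]
  · intro a _
    simp
  · intro a _ c1 c2
    rw [← Finsupp.sum_add]
    refine Finsupp.sum_congr fun b _ => ?_
    split_ifs
    · rw [← add_smul]; ring_nf
    · simp

lemma contract_add_right {σ : Type*} (D f g : MvPolynomial σ ℂ) :
    contract D (f + g) = contract D f + contract D g := by
  classical
  unfold contract
  rw [← Finsupp.sum_add]
  refine Finsupp.sum_congr fun a _ => ?_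
  rw [AddMonoidAlgebra.coeff_add, Finsupp.sum_add_index]
  · intro b _
    split_ifs <;> simp
  · intro b _ c1 c2
    split_ifs
    · rw [← add_smul]; ring_nf
    · simp

lemma contract_smul_right {σ : Type*} (r : ℂ) (D f : MvPolynomial σ ℂ) :
    contract D (r • f) = r • contract D f := by
  classical
  unfold contract
  rw [Finsupp.smul_sum]
  refine Finsupp.sum_congr fun a _ => ?_
  rw [AddMonoidAlgebra.coeff_smul, Finsupp.sum_smul_index (fun b => by split_ifs <;> simp), Finsupp.smul_sum]
  refine Finsupp.sum_congr fun b _ => ?_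
  split_ifs
  · rw [smul_smul]; ring_nf
  · simp

lemma contract_sub_left {σ : Type*} (D E f : MvPolynomial σ ℂ) :
    contract (D - E) f = contract D f - contract E f := by
  have h := contract_add_left (D - E) E f
  rw [sub_add_cancel] at h
  rw [eq_sub_iff_add_eq, ← h]

lemma contract_sum_right {σ ι : Type*} (D : MvPolynomial σ ℂ) (t : Finset ι)
    (f : ι → MvPolynomial σ ℂ) :
    contract D (∑ i ∈ t, f i) = ∑ i ∈ t, contract D (f i) := by
  classical
  induction t using Finset.induction with
  | empty => simpa using contract_zero_right D
  | insert _ _ hx ih => rw [Finset.sum_insert hx, Finset.sum_insert hx, contract_add_right, ih]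

lemma contract_mul {σ : Type*} (P Q f : MvPolynomial σ ℂ) :
    contract (P * Q) f = contract P (contract Q f) := by
  induction f using MvPolynomial.induction_on' with
  | add f g hf hg =>
      rw [contract_add_right, contract_add_right, contract_add_right, hf, hg]
  | monomial b d =>
      induction P using MvPolynomial.induction_on' with
      | add P1 P2 h1 h2 =>
          rw [add_mul, contract_add_left, contract_add_left, h1, h2]
      | monomial a c =>
          induction Q using MvPolynomial.induction_on' with
          | add Q1 Q2 h1 h2 =>
              rw [mul_add, contract_add_left, h1, h2, contract_add_left, contract_add_right]
          | monomial a' c' =>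
              rw [monomial_mul, contract_monomial_monomial, contract_monomial_monomial,
                contract_smul_right, contract_monomial_monomial,
                tsub_tsub, add_comm a' a, ctL_add, smul_smul]
              ring_nf

lemma ctL_zero_left {σ : Type*} (b : σ →₀ ℕ) : ctL (0 : σ →₀ ℕ) b = 1 :=
  Finsupp.prod_zero_index

lemma contract_C {σ : Type*} (r : ℂ) (g : MvPolynomial σ ℂ) : contract (C r) g = r • g := by
  induction g using MvPolynomial.induction_on' with
  | monomial b d =>
      rw [show (C r : MvPolynomial σ ℂ) = monomial 0 r from rfl,
        contract_monomial_monomial, tsub_zero, ctL_zero_left, MvPolynomial.smul_monomial,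
        MvPolynomial.smul_monomial]
      simp
  | add f g hf hg => rw [contract_add_right, hf, hg, smul_add]

lemma contract_smul_left {σ : Type*} (r : ℂ) (D f : MvPolynomial σ ℂ) :
    contract (r • D) f = r • contract D f := by
  rw [show r • D = C r * D by rw [MvPolynomial.smul_eq_C_mul], contract_mul, contract_C]

lemma ctL_single {σ : Type*} [DecidableEq σ] (i : σ) (q : ℕ) (b : σ →₀ ℕ) :
    ctL (Finsupp.single i q) b = ((b i).descFactorial q : ℂ) := by
  unfold ctL
  exact Finsupp.prod_single_index (by simp)

/-- contraction of a single power against a power sum -/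
lemma contract_pow_sum {σ : Type*} [Fintype σ] [DecidableEq σ] (i : σ) (q m : ℕ)
    (hq : 1 ≤ q) :
    contract (X i ^ q : MvPolynomial σ ℂ) (∑ k : σ, X k ^ m) =
      ((m.descFactorial q : ℂ)) • monomial (Finsupp.single i (m - q)) 1 := by
  rw [show (X i ^ q : MvPolynomial σ ℂ) = monomial (Finsupp.single i q) 1 from
    X_pow_eq_monomial, contract_sum_right]
  rw [Finset.sum_eq_single i]
  · rw [show (X i ^ m : MvPolynomial σ ℂ) = monomial (Finsupp.single i m) 1 from
      X_pow_eq_monomial, contract_monomial_monomial, ctL_single]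
    simp [Finsupp.tsub_apply, ← Finsupp.single_tsub]
  · intro k _ hk
    rw [show (X k ^ m : MvPolynomial σ ℂ) = monomial (Finsupp.single k m) 1 from
      X_pow_eq_monomial, contract_monomial_monomial, ctL_single]
    rw [show (Finsupp.single k m) i = 0 from Finsupp.single_eq_of_ne' hk]
    simp [Nat.descFactorial_eq_zero_iff_lt.2 hq]
  · simp

lemma contract_mul_XX_pow_sum {σ : Type*} [Fintype σ] [DecidableEq σ] {i j : σ}
    (hij : i ≠ j) (m : ℕ) :
    contract (X i * X j : MvPolynomial σ ℂ) (∑ k : σ, X k ^ m) = 0 := by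
  rw [show (X i * X j : MvPolynomial σ ℂ)
      = monomial (Finsupp.single i 1 + Finsupp.single j 1) 1 by
    rw [X, X, monomial_mul, mul_one], contract_sum_right]
  refine Finset.sum_eq_zero fun k _ => ?_
  rw [show (X k ^ m : MvPolynomial σ ℂ) = monomial (Finsupp.single k m) 1 from
    X_pow_eq_monomial, contract_monomial_monomial, ctL_eq_zero, mul_zero, zero_smul]
  intro hle
  rw [Finsupp.le_def] at hle
  rcases eq_or_ne i k with rfl | h
  · have := hle j
    simp [Finsupp.add_apply, Finsupp.single_apply, hij, hij.symm] at this
  · have := hle i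
    simp [Finsupp.add_apply, Finsupp.single_apply, h, Ne.symm h] at this

def gens (σ : Type*) (s : ℕ) : Set (MvPolynomial σ ℂ) :=
  {P | ∃ i j : σ, i ≠ j ∧ (P = X i * X j ∨ P = X i ^ (s + 2) - X j ^ (s + 2))}

lemma span_subset_ker {σ : Type*} [Fintype σ] [DecidableEq σ] {s : ℕ}
    {D : MvPolynomial σ ℂ} (hD : D ∈ Ideal.span (gens σ s)) :
    contract D (∑ k : σ, X k ^ (s + 2)) = 0 := by
  refine Submodule.span_induction ?_ ?_ ?_ ?_ hD
  · rintro P ⟨i, j, hij, rfl | rfl⟩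
    · exact contract_mul_XX_pow_sum hij _
    · rw [contract_sub_left, contract_pow_sum i (s+2) (s+2) (by omega),
        contract_pow_sum j (s+2) (s+2) (by omega)]
      simp
  · exact contract_zero_left _
  · intro x y _ _ hx hy
    rw [contract_add_left, hx, hy, add_zero]
  · intro a x _ hx
    rw [smul_eq_mul, contract_mul, hx, contract_zero_right]

noncomputable def nf {σ : Type*} [Fintype σ] (i0 : σ) (s : ℕ)
    (c0 cs : ℂ) (r : σ → Fin (s + 1) → ℂ) : MvPolynomial σ ℂ :=
  C c0 + cs • X i0 ^ (s + 2) + ∑ i : σ, ∑ k : Fin (s + 1), r i k • X i ^ ((k : ℕ) + 1)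

lemma reduce {σ : Type*} [Fintype σ] [DecidableEq σ] (hcard : 1 < Fintype.card σ)
    (i0 : σ) (s : ℕ) (D : MvPolynomial σ ℂ) :
    ∃ (c0 cs : ℂ) (r : σ → Fin (s + 1) → ℂ),
      D - nf i0 s c0 cs r ∈ Ideal.span (gens σ s) := by
  induction D using MvPolynomial.induction_on' with
  | add p q hp hq =>
      obtain ⟨c0, cs, r, hp⟩ := hp
      obtain ⟨c0', cs', r', hq⟩ := hq
      refine ⟨c0 + c0', cs + cs', r + r', ?_⟩
      have : p + q - nf i0 s (c0 + c0') (cs + cs') (r + r')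
          = (p - nf i0 s c0 cs r) + (q - nf i0 s c0' cs' r') := by
        simp only [nf, C_add, add_smul, Pi.add_apply, Finset.sum_add_distrib]
        ring
      rw [this]
      exact add_mem hp hq
  | monomial u c =>
      have nf_zero : nf i0 s 0 0 0 = 0 := by
        simp only [nf, map_zero, zero_smul, Pi.zero_apply, Finset.sum_const_zero,
          add_zero, zero_add]
      by_cases h0 : u = 0
      · refine ⟨c, 0, 0, ?_⟩
        have : nf i0 s c 0 0 = monomial u c := by
          simp only [nf, zero_smul, Pi.zero_apply, Finset.sum_const_zero, add_zero, h0]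
          rw [C_apply]
        rw [this, sub_self]
        exact zero_mem _
      by_cases h2 : ∃ i j : σ, i ≠ j ∧ u i ≠ 0 ∧ u j ≠ 0
      · obtain ⟨i, j, hij, hi, hj⟩ := h2
        refine ⟨0, 0, 0, ?_⟩
        rw [nf_zero, sub_zero]
        have hi' : 1 ≤ u i := Nat.one_le_iff_ne_zero.2 hi
        have hj' : 1 ≤ u j := Nat.one_le_iff_ne_zero.2 hj
        have hidx : u - (Finsupp.single i 1 + Finsupp.single j 1)
            + (Finsupp.single i 1 + Finsupp.single j 1) = u := by
          ext l
          simp only [Finsupp.coe_add, Finsupp.coe_tsub, Pi.add_apply, Pi.sub_apply]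
          rcases eq_or_ne l i with rfl | hli
          · rw [Finsupp.single_eq_same, Finsupp.single_eq_of_ne' (Ne.symm hij)]
            omega
          · rcases eq_or_ne l j with rfl | hlj
            · rw [Finsupp.single_eq_same, Finsupp.single_eq_of_ne' (Ne.symm hli)]
              omega
            · rw [Finsupp.single_eq_of_ne' (Ne.symm hli), Finsupp.single_eq_of_ne' (Ne.symm hlj)]
              omega
        have key : monomial u c
            = monomial (u - (Finsupp.single i 1 + Finsupp.single j 1)) c * (X i * X j) := by
          rw [X, X, monomial_mul, monomial_mul, mul_one, mul_one, hidx]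
        rw [key]
        exact Ideal.mul_mem_left _ _ (Ideal.subset_span ⟨i, j, hij, Or.inl rfl⟩)
      · -- u is supported at a single point i, with value k ≥ 1
        push_neg at h2
        obtain ⟨i, hi⟩ : ∃ i, u i ≠ 0 := by
          by_contra h
          push_neg at h
          exact h0 (Finsupp.ext h)
        have hu : u = Finsupp.single i (u i) := by
          ext l
          rcases eq_or_ne l i with rfl | hl
          · simp
          · rw [Finsupp.single_eq_of_ne' (Ne.symm hl)]
            exact h2 i l (Ne.symm hl) hi
        set k := u i with hk
        have hk1 : 1 ≤ k := Nat.one_le_iff_ne_zero.2 hi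
        rcases lt_trichotomy k (s + 2) with hlt | heq | hgt
        · -- k ≤ s+1 : pure normal form part
          refine ⟨0, 0, fun i' k' => if i' = i ∧ (k' : ℕ) = k - 1 then c else 0, ?_⟩
          have : nf i0 s 0 0 (fun i' k' => if i' = i ∧ (k' : ℕ) = k - 1 then c else 0)
              = monomial u c := by
            rw [nf]
            rw [Finset.sum_eq_single i]
            · rw [Finset.sum_eq_single (⟨k - 1, by omega⟩ : Fin (s + 1))]
              · rw [if_pos (show i = i ∧ (((⟨k - 1, by omega⟩ : Fin (s + 1)) : ℕ)) = k - 1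
                  from ⟨rfl, rfl⟩)]
                simp only [C_0, zero_smul, zero_add, add_zero]
                rw [show (k - 1) + 1 = k by omega, hu, X_pow_eq_monomial, smul_monomial,
                  smul_eq_mul, mul_one]
              · intro k' _ hk'
                rw [if_neg, zero_smul]
                rintro ⟨-, h⟩
                exact hk' (Fin.ext h)
              · simp
            · intro i' _ hi'
              refine Finset.sum_eq_zero fun k' _ => ?_
              rw [if_neg (fun h => hi' h.1), zero_smul]
            · simp
          rw [this, sub_self]
          exact zero_mem _
        · -- k = s+2
          refine ⟨0, c, 0, ?_⟩
          have hu2 : u = Finsupp.single i (s + 2) := by rw [hu, heq]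
          have hnfc : nf i0 s 0 c 0 = c • X i0 ^ (s + 2) := by
            simp only [nf, map_zero, Pi.zero_apply, zero_smul, Finset.sum_const_zero,
              add_zero, zero_add]
          have : monomial u c - nf i0 s 0 c 0 = c • (X i ^ (s + 2) - X i0 ^ (s + 2)) := by
            rw [hnfc, hu2, smul_sub]
            congr 1
            rw [X_pow_eq_monomial, smul_monomial, smul_eq_mul, mul_one]
          rw [this]
          rcases eq_or_ne i i0 with rfl | hne
          · rw [sub_self, smul_zero]
            exact zero_mem _
          · rw [show c • (X i ^ (s+2) - X i0 ^ (s+2) : MvPolynomial σ ℂ)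
                = C c * (X i ^ (s+2) - X i0 ^ (s+2)) from smul_eq_C_mul _ _]
            exact Ideal.mul_mem_left _ _ (Ideal.subset_span ⟨i, i0, hne, Or.inr rfl⟩)
        · -- k ≥ s+3
          refine ⟨0, 0, 0, ?_⟩
          rw [nf_zero, sub_zero]
          obtain ⟨j, hj⟩ := Fintype.exists_ne_of_one_lt_card hcard i
          have hsplit : (X i : MvPolynomial σ ℂ) ^ k
              = X i ^ (k - (s + 3) + 1) * X i ^ (s + 2) := by
            rw [← pow_add]
            congr 1
            omega
          have e : monomial u c
              = (C c * X i ^ (k - (s + 3) + 1)) * (X i ^ (s + 2) - X j ^ (s + 2))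
                + (C c * (X i ^ (k - (s + 3)) * X j ^ (s + 1))) * (X i * X j) := by
            rw [hu, ← C_mul_X_pow_eq_monomial, hsplit]
            ring
          rw [e]
          exact add_mem
            (Ideal.mul_mem_left _ _ (Ideal.subset_span ⟨i, j, Ne.symm hj, Or.inr rfl⟩))
            (Ideal.mul_mem_left _ _ (Ideal.subset_span ⟨i, j, Ne.symm hj, Or.inl rfl⟩))

lemma contract_sum_left {σ ι : Type*} (t : Finset ι) (f : ι → MvPolynomial σ ℂ)
    (g : MvPolynomial σ ℂ) :
    contract (∑ i ∈ t, f i) g = ∑ i ∈ t, contract (f i) g := by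
  classical
  induction t using Finset.induction with
  | empty => simpa using contract_zero_left g
  | insert _ _ hx ih => rw [Finset.sum_insert hx, Finset.sum_insert hx, contract_add_left, ih]

lemma contract_nf {σ : Type*} [Fintype σ] [DecidableEq σ] (i0 : σ) (s : ℕ)
    (c0 cs : ℂ) (r : σ → Fin (s + 1) → ℂ) :
    contract (nf i0 s c0 cs r) (∑ k : σ, X k ^ (s + 2)) =
      c0 • (∑ k : σ, X k ^ (s + 2))
        + (cs * ((s + 2).descFactorial (s + 2) : ℂ)) • monomial (0 : σ →₀ ℕ) 1
        + ∑ i : σ, ∑ k : Fin (s + 1),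
            (r i k * ((s + 2).descFactorial ((k : ℕ) + 1) : ℂ)) •
              monomial (Finsupp.single i (s + 1 - (k : ℕ))) 1 := by
  rw [nf, contract_add_left, contract_add_left, contract_C, contract_smul_left,
    contract_pow_sum i0 (s + 2) (s + 2) (by omega), contract_sum_left]
  congr 1
  · congr 1
    rw [smul_smul, Nat.sub_self, Finsupp.single_zero]
  · refine Finset.sum_congr rfl fun i _ => ?_
    rw [contract_sum_left]
    refine Finset.sum_congr rfl fun k _ => ?_
    rw [contract_smul_left, contract_pow_sum i ((k : ℕ) + 1) (s + 2) (by omega), smul_smul,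
      show s + 2 - ((k : ℕ) + 1) = s + 1 - (k : ℕ) by omega]

lemma nf_ker_eq_zero {σ : Type*} [Fintype σ] [DecidableEq σ] (i0 : σ) (s : ℕ)
    (c0 cs : ℂ) (r : σ → Fin (s + 1) → ℂ)
    (h : contract (nf i0 s c0 cs r) (∑ k : σ, X k ^ (s + 2)) = 0) :
    nf i0 s c0 cs r = 0 := by
  rw [contract_nf] at h
  have hd0 : (s + 2).descFactorial (s + 2) ≠ 0 := by
    rw [Ne, Nat.descFactorial_eq_zero_iff_lt]
    omega
  have key : ∀ μ : σ →₀ ℕ,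
      (((c0 * ∑ x : σ, if (Finsupp.single x (s + 2) : σ →₀ ℕ) = μ then (1 : ℂ) else 0) +
        cs * ((s + 2).descFactorial (s + 2) : ℂ) * (if (0 : σ →₀ ℕ) = μ then 1 else 0)) +
      ∑ x : σ, ∑ x1 : Fin (s + 1),
        r x x1 * (((s + 2).descFactorial ((x1 : ℕ) + 1)) : ℂ) *
          (if (Finsupp.single x (s + 1 - (x1 : ℕ)) : σ →₀ ℕ) = μ then 1 else 0)) = 0 := by
    intro μ
    have h1 := congrArg (coeff μ) h
    simpa only [coeff_add, coeff_smul, coeff_sum, coeff_monomial, coeff_zero, coeff_X_pow,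
      smul_eq_mul] using h1
  have hc0 : c0 = 0 := by
    have h1 := key (Finsupp.single i0 (s + 2))
    have e1 : (∑ x : σ, if (Finsupp.single x (s + 2) : σ →₀ ℕ)
        = Finsupp.single i0 (s + 2) then (1 : ℂ) else 0) = 1 := by
      rw [Finset.sum_eq_single i0]
      · rw [if_pos rfl]
      · intro k _ hk
        rw [if_neg]
        intro hh
        exact hk ((Finsupp.single_left_inj (by omega)).1 hh)
      · simp
    have e2 : (if (0 : σ →₀ ℕ) = Finsupp.single i0 (s + 2) then (1 : ℂ) else 0) = 0 := by
      rw [if_neg]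
      intro hh
      have := Finsupp.single_eq_zero.1 hh.symm
      omega
    rw [e1, e2, Finset.sum_eq_zero (fun x _ => Finset.sum_eq_zero fun k _ => by
      rw [if_neg, mul_zero]
      intro hh
      have hk := k.is_le
      rcases (Finsupp.single_eq_single_iff _ _ _ _).1 hh with ⟨-, h2⟩ | ⟨h2, h3⟩ <;>
        omega)] at h1
    simpa using h1
  have hcs : cs = 0 := by
    have h1 := key 0
    have e1 : (∑ x : σ, if (Finsupp.single x (s + 2) : σ →₀ ℕ) = 0 then (1 : ℂ) else 0)
        = 0 := by
      refine Finset.sum_eq_zero fun x _ => ?_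
      rw [if_neg]
      intro hh
      have := Finsupp.single_eq_zero.1 hh
      omega
    rw [e1, if_pos rfl, Finset.sum_eq_zero (fun x _ => Finset.sum_eq_zero fun k _ => by
      rw [if_neg, mul_zero]
      intro hh
      have hk := k.is_le
      have := Finsupp.single_eq_zero.1 hh
      omega)] at h1
    have hd : ((s + 2).descFactorial (s + 2) : ℂ) ≠ 0 := by exact_mod_cast hd0
    simp only [hc0, zero_mul, mul_one, add_zero, zero_add, mul_zero] at h1
    exact (mul_eq_zero.1 h1).resolve_right hd
  have hr : ∀ (i : σ) (k : Fin (s + 1)), r i k = 0 := by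
    intro i k
    have hk := k.is_le
    have h1 := key (Finsupp.single i (s + 1 - (k : ℕ)))
    have e1 : (∑ x : σ, if (Finsupp.single x (s + 2) : σ →₀ ℕ)
        = Finsupp.single i (s + 1 - (k : ℕ)) then (1 : ℂ) else 0) = 0 := by
      refine Finset.sum_eq_zero fun x _ => ?_
      rw [if_neg]
      intro hh
      rcases (Finsupp.single_eq_single_iff _ _ _ _).1 hh with ⟨-, h2⟩ | ⟨h2, h3⟩ <;> omega
    have e2 : (if (0 : σ →₀ ℕ) = Finsupp.single i (s + 1 - (k : ℕ)) then (1 : ℂ) else 0)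
        = 0 := by
      rw [if_neg]
      intro hh
      have := Finsupp.single_eq_zero.1 hh.symm
      omega
    rw [e1, e2, Finset.sum_eq_single i] at h1
    · rw [Finset.sum_eq_single k] at h1
      · rw [if_pos rfl, mul_one] at h1
        simp only [hc0, hcs, zero_mul, mul_zero, zero_add, add_zero] at h1
        have hd : ((s + 2).descFactorial ((k : ℕ) + 1) : ℂ) ≠ 0 := by
          have : (s + 2).descFactorial ((k : ℕ) + 1) ≠ 0 := by
            rw [Ne, Nat.descFactorial_eq_zero_iff_lt]
            omega
          exact_mod_cast this
        exact (mul_eq_zero.1 h1).resolve_right hd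
      · intro k' _ hk'
        rw [if_neg, mul_zero]
        intro hh
        have hk'' := k'.is_le
        rcases (Finsupp.single_eq_single_iff _ _ _ _).1 hh with ⟨-, h2⟩ | ⟨h2, h3⟩
        · exact hk' (Fin.ext (by omega))
        · omega
      · simp
    · intro i' _ hi'
      refine Finset.sum_eq_zero fun k' _ => ?_
      rw [if_neg, mul_zero]
      intro hh
      have hk'' := k'.is_le
      rcases (Finsupp.single_eq_single_iff _ _ _ _).1 hh with ⟨h2, -⟩ | ⟨h2, h3⟩
      · exact hi' h2
      · omega
    · simp
  rw [nf, hc0, hcs]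
  simp only [map_zero, zero_smul, zero_add]
  refine Finset.sum_eq_zero fun i _ => Finset.sum_eq_zero fun k _ => ?_
  rw [hr i k, zero_smul]

end ApolarAux

open ApolarAux in
/-- For the Fermat polynomial
`F = x_0^{s+2} + ⋯ + x_{N-2}^{s+2}` of degree `s+2` in `N-1` variables
(`N ≥ 3`, `s ≥ 1`), the apolar ideal `F^⊥ = {D | D·F = 0}` in the dual
polynomial ring `ℂ[∂_0,…,∂_{N-2}]` is generated by the monomials `∂_i ∂_j`
(`i ≠ j`) together with the binomials `∂_i^{s+2} - ∂_j^{s+2}` (`i ≠ j`). -/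
theorem fermat_apolar_ideal (N s : ℕ) (hN : 3 ≤ N) (hs : 1 ≤ s)
    (F : MvPolynomial (Fin (N - 1)) ℂ)
    (hF : F = ∑ i : Fin (N - 1), X i ^ (s + 2)) :
    ∀ D : MvPolynomial (Fin (N - 1)) ℂ,
      contract D F = 0 ↔
        D ∈ Ideal.span {P : MvPolynomial (Fin (N - 1)) ℂ |
          ∃ i j : Fin (N - 1), i ≠ j ∧
            (P = X i * X j ∨ P = X i ^ (s + 2) - X j ^ (s + 2))} := by
  subst hF
  intro D
  have hcard : 1 < Fintype.card (Fin (N - 1)) := by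
    rw [Fintype.card_fin]
    omega
  have hspan : Ideal.span {P : MvPolynomial (Fin (N - 1)) ℂ |
      ∃ i j : Fin (N - 1), i ≠ j ∧
        (P = X i * X j ∨ P = X i ^ (s + 2) - X j ^ (s + 2))}
      = Ideal.span (gens (Fin (N - 1)) s) := rfl
  rw [hspan]
  constructor
  · intro hD
    obtain ⟨c0, cs, r, hmem⟩ :=
      reduce hcard (⟨0, by omega⟩ : Fin (N - 1)) s D
    have h1 := span_subset_ker hmem
    rw [contract_sub_left, hD, zero_sub, neg_eq_zero] at h1
    have h2 := nf_ker_eq_zero (⟨0, by omega⟩ : Fin (N - 1)) s c0 cs r h1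
    rw [h2, sub_zero] at hmem
    exact hmem
  · exact fun h => span_subset_ker h
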